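/- A non-abelian group of order pq, where p < q are primes with p dividing q − 1, has exactly one subgroup of order q (which is normal) and exactly q subgroups of order p; no two distinct subgroups of order p permute, while the subgroup of order q permutes with every subgroup. Hence its permutability graph is the star K_{1,q}. -/

import Mathlib

open Pointwise

/-- If the set product of two subgroups commutes, it is the carrier of a subgroup. -/
def mulSubgroup {G : Type*} [Group G] (H K : Subgroup G)
    (hcomm : (H : Set G) * (K : Set G) = (K : Set G) * (H : Set G)) : Subgroup G where
  carrier := (H : Set G) * (K : Set G)
  one_mem' := ⟨1, H.one_mem, 1, K.one_mem, mul_one 1⟩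
  mul_mem' := by
    rintro a b ⟨h₁, hh₁, k₁, hk₁, rfl⟩ ⟨h₂, hh₂, k₂, hk₂, rfl⟩
    have : k₁ * h₂ ∈ (K : Set G) * (H : Set G) := ⟨k₁, hk₁, h₂, hh₂, rfl⟩
    rw [← hcomm] at this
    obtain ⟨h₃, hh₃, k₃, hk₃, heq⟩ := this
    refine ⟨h₁ * h₃, H.mul_mem hh₁ hh₃, k₃ * k₂, K.mul_mem hk₃ hk₂, ?_⟩
    calc h₁ * h₃ * (k₃ * k₂) = h₁ * (h₃ * k₃) * k₂ := by group
    _ = h₁ * (k₁ * h₂) * k₂ := by rw [show h₃ * k₃ = k₁ * h₂ from heq]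
    _ = h₁ * k₁ * (h₂ * k₂) := by group
  inv_mem' := by
    rintro a ⟨h, hh, k, hk, rfl⟩
    have : k⁻¹ * h⁻¹ ∈ (K : Set G) * (H : Set G) := ⟨k⁻¹, K.inv_mem hk, h⁻¹, H.inv_mem hh, rfl⟩
    rw [← hcomm] at this
    simpa [mul_inv_rev] using this

theorem stmt9 {p q : ℕ} (hp : p.Prime) (hq : q.Prime) (hpq : p < q) (hdvd : p ∣ q - 1)
    (G : Type*) [Group G] [Finite G] (hG : Nat.card G = p * q)
    (hna : ¬ ∀ a b : G, a * b = b * a) :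
    (∃! Q : Subgroup G, Nat.card Q = q) ∧
    (∀ Q : Subgroup G, Nat.card Q = q →
      Q.Normal ∧ ∀ H : Subgroup G, (Q : Set G) * (H : Set G) = (H : Set G) * (Q : Set G)) ∧
    Nat.card {H : Subgroup G // Nat.card H = p} = q ∧
    ∀ H K : Subgroup G, Nat.card H = p → Nat.card K = p → H ≠ K →
      (H : Set G) * (K : Set G) ≠ (K : Set G) * (H : Set G) := by
  haveI : Fact p.Prime := ⟨hp⟩
  haveI : Fact q.Prime := ⟨hq⟩
  have hpne : p ≠ q := hpq.ne
  have hp0 : p ≠ 0 := hp.ne_zero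
  have hq0 : q ≠ 0 := hq.ne_zero
  -- factorization facts
  have hfacp : (Nat.card G).factorization p = 1 := by
    rw [hG, Nat.factorization_mul hp0 hq0]
    simp [hp.factorization, hq.factorization, Finsupp.single_apply, hpne, hpne.symm]
  have hfacq : (Nat.card G).factorization q = 1 := by
    rw [hG, Nat.factorization_mul hp0 hq0]
    simp [hp.factorization, hq.factorization, Finsupp.single_apply, hpne, hpne.symm]
  -- any subgroup of card q is the q-Sylow; card of Sylow q G divides p
  have hcardsyl : ∀ (P : Sylow q G), Nat.card P = q := fun P => by
    rw [P.card_eq_multiplicity, hfacq, pow_one]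
  have hindexq : ∀ (P : Sylow q G), (P : Subgroup G).index = p := by
    intro P
    have h1 := Subgroup.card_mul_index (P : Subgroup G)
    rw [hcardsyl P, hG, mul_comm p q] at h1
    exact Nat.eq_of_mul_eq_mul_left hq.pos h1
  have hsylq1 : Nat.card (Sylow q G) = 1 := by
    have hdvd' : Nat.card (Sylow q G) ∣ p := by
      have := Sylow.card_dvd_index (p := q) (G := G) (Classical.arbitrary _)
      rwa [hindexq] at this
    have hmod := card_sylow_modEq_one q G
    rcases (Nat.Prime.eq_one_or_self_of_dvd hp _ hdvd') with h | h
    · exact h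
    · exfalso
      rw [h] at hmod
      have h1 : p % q = 1 % q := hmod
      rw [Nat.mod_eq_of_lt hpq, Nat.mod_eq_of_lt hq.one_lt] at h1
      exact hp.one_lt.ne' h1
  haveI hsub : Subsingleton (Sylow q G) := (Nat.card_eq_one_iff_unique.mp hsylq1).1
  -- subgroup of card q ↔ Sylow
  have hofq : ∀ Q : Subgroup G, Nat.card Q = q → ∃ P : Sylow q G, (P : Subgroup G) = Q := by
    intro Q hQ
    exact ⟨Sylow.ofCard Q (by rw [hQ, hfacq, pow_one]), rfl⟩
  -- unique subgroup of order q
  obtain ⟨P₀⟩ : Nonempty (Sylow q G) := inferInstance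
  have huniq : ∀ Q : Subgroup G, Nat.card Q = q → Q = (P₀ : Subgroup G) := by
    intro Q hQ
    obtain ⟨P, hP⟩ := hofq Q hQ
    rw [← hP, Subsingleton.elim P P₀]
  -- normality of any subgroup of order q
  have hnormal : ∀ Q : Subgroup G, Nat.card Q = q → Q.Normal := by
    intro Q hQ
    obtain ⟨P, hP⟩ := hofq Q hQ
    rw [← hP]
    rw [← Subgroup.normalizer_eq_top_iff]
    rw [eq_top_iff]
    intro g _
    refine Sylow.smul_eq_iff_mem_normalizer.mp ?_
    exact Subsingleton.elim _ _
  refine ⟨⟨(P₀ : Subgroup G), hcardsyl P₀, fun Q hQ => huniq Q hQ⟩, ?_, ?_, ?_⟩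
  · intro Q hQ
    haveI := hnormal Q hQ
    refine ⟨hnormal Q hQ, fun H => ?_⟩
    rw [← Subgroup.normal_mul, ← Subgroup.mul_normal, sup_comm]
  · -- number of subgroups of order p is q
    have hcardsylp : ∀ (P : Sylow p G), Nat.card P = p := fun P => by
      rw [P.card_eq_multiplicity, hfacp, pow_one]
    have hindexp : ∀ (P : Sylow p G), (P : Subgroup G).index = q := by
      intro P
      have h1 := Subgroup.card_mul_index (P : Subgroup G)
      rw [hcardsylp P, hG] at h1
      exact Nat.eq_of_mul_eq_mul_left hp.pos h1
    have hequiv : Nat.card {H : Subgroup G // Nat.card H = p} = Nat.card (Sylow p G) := by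
      apply Nat.card_congr
      exact
        { toFun := fun H => Sylow.ofCard H.1 (by rw [H.2, hfacp, pow_one])
          invFun := fun P => ⟨(P : Subgroup G), hcardsylp P⟩
          left_inv := fun H => Subtype.ext rfl
          right_inv := fun P => Sylow.ext rfl }
    rw [hequiv]
    have hdvd' : Nat.card (Sylow p G) ∣ q := by
      have := Sylow.card_dvd_index (p := p) (G := G) (Classical.arbitrary _)
      rwa [hindexp] at this
    rcases (Nat.Prime.eq_one_or_self_of_dvd hq _ hdvd') with h | h
    · -- then p-Sylow is normal and G is abelian, contradiction
      exfalso
      apply hna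
      obtain ⟨P⟩ : Nonempty (Sylow p G) := inferInstance
      haveI hsubp : Subsingleton (Sylow p G) := (Nat.card_eq_one_iff_unique.mp h).1
      have hPnormal : (P : Subgroup G).Normal := by
        rw [← Subgroup.normalizer_eq_top_iff, eq_top_iff]
        intro g _
        refine Sylow.smul_eq_iff_mem_normalizer.mp ?_
        exact Subsingleton.elim _ _
      haveI := hPnormal
      haveI := hnormal (P₀ : Subgroup G) (hcardsyl P₀)
      -- disjointness
      have hdisj : Disjoint (P : Subgroup G) (P₀ : Subgroup G) := by
        have d1 : Nat.card ((P : Subgroup G) ⊓ (P₀ : Subgroup G) : Subgroup G) ∣ p :=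
          by
          have := Subgroup.card_dvd_of_le
            (inf_le_left : (P : Subgroup G) ⊓ (P₀ : Subgroup G) ≤ (P : Subgroup G))
          rwa [hcardsylp P] at this
        have d2 : Nat.card ((P : Subgroup G) ⊓ (P₀ : Subgroup G) : Subgroup G) ∣ q :=
          by
          have := Subgroup.card_dvd_of_le
            (inf_le_right : (P : Subgroup G) ⊓ (P₀ : Subgroup G) ≤ (P₀ : Subgroup G))
          rwa [hcardsyl P₀] at this
        have hcop : Nat.gcd p q = 1 := (Nat.coprime_primes hp hq).mpr hpne
        have h1 : Nat.card ((P : Subgroup G) ⊓ (P₀ : Subgroup G) : Subgroup G) = 1 :=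
          Nat.eq_one_of_dvd_one (hcop ▸ Nat.dvd_gcd d1 d2)
        exact disjoint_iff.mpr (Subgroup.card_eq_one.mp h1)
      have hcomm := Subgroup.commute_of_normal_of_disjoint _ _ hPnormal
        (hnormal (P₀ : Subgroup G) (hcardsyl P₀)) hdisj
      -- sup is top
      have hsup : (P : Subgroup G) ⊔ (P₀ : Subgroup G) = ⊤ := by
        have dp : p ∣ Nat.card ((P : Subgroup G) ⊔ (P₀ : Subgroup G) : Subgroup G) :=
          by
          have := Subgroup.card_dvd_of_le
            (le_sup_left : (P : Subgroup G) ≤ (P : Subgroup G) ⊔ (P₀ : Subgroup G))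
          rwa [hcardsylp P] at this
        have dq : q ∣ Nat.card ((P : Subgroup G) ⊔ (P₀ : Subgroup G) : Subgroup G) :=
          by
          have := Subgroup.card_dvd_of_le
            (le_sup_right : (P₀ : Subgroup G) ≤ (P : Subgroup G) ⊔ (P₀ : Subgroup G))
          rwa [hcardsyl P₀] at this
        have hcop : Nat.Coprime p q := (Nat.coprime_primes hp hq).mpr hpne
        have hdvd1 : p * q ∣ Nat.card ((P : Subgroup G) ⊔ (P₀ : Subgroup G) : Subgroup G) :=
          hcop.mul_dvd_of_dvd_of_dvd dp dq
        have hdvd2 : Nat.card ((P : Subgroup G) ⊔ (P₀ : Subgroup G) : Subgroup G) ∣ p * q :=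
          hG ▸ Subgroup.card_subgroup_dvd_card _
        exact Subgroup.eq_top_of_card_eq _ ((Nat.dvd_antisymm hdvd2 hdvd1).trans hG.symm)
      -- decompose elements
      have hdecomp : ∀ a : G, ∃ x ∈ (P : Subgroup G), ∃ y ∈ (P₀ : Subgroup G), a = x * y := by
        intro a
        have : a ∈ ((P : Subgroup G) : Set G) * ((P₀ : Subgroup G) : Set G) := by
          rw [← Subgroup.mul_normal, hsup]
          trivial
        obtain ⟨x, hx, y, hy, rfl⟩ := this
        exact ⟨x, hx, y, hy, rfl⟩
      haveI : IsCyclic (P : Subgroup G) := isCyclic_of_prime_card (hcardsylp P)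
      haveI : IsCyclic (P₀ : Subgroup G) := isCyclic_of_prime_card (hcardsyl P₀)
      have hcommP : ∀ x₁ x₂ : G, x₁ ∈ (P : Subgroup G) → x₂ ∈ (P : Subgroup G) →
          x₁ * x₂ = x₂ * x₁ := by
        intro x₁ x₂ h1 h2
        letI := IsCyclic.commGroup (α := (P : Subgroup G))
        exact congrArg Subtype.val (mul_comm (⟨x₁, h1⟩ : (P : Subgroup G)) ⟨x₂, h2⟩)
      have hcommQ : ∀ x₁ x₂ : G, x₁ ∈ (P₀ : Subgroup G) → x₂ ∈ (P₀ : Subgroup G) →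
          x₁ * x₂ = x₂ * x₁ := by
        intro x₁ x₂ h1 h2
        letI := IsCyclic.commGroup (α := (P₀ : Subgroup G))
        exact congrArg Subtype.val (mul_comm (⟨x₁, h1⟩ : (P₀ : Subgroup G)) ⟨x₂, h2⟩)
      intro a b
      obtain ⟨x₁, hx₁, y₁, hy₁, rfl⟩ := hdecomp a
      obtain ⟨x₂, hx₂, y₂, hy₂, rfl⟩ := hdecomp b
      have c12 : y₁ * x₂ = x₂ * y₁ := (hcomm x₂ y₁ hx₂ hy₁).symm
      have c21 : y₂ * x₁ = x₁ * y₂ := (hcomm x₁ y₂ hx₁ hy₂).symm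
      calc x₁ * y₁ * (x₂ * y₂) = x₁ * (y₁ * x₂) * y₂ := by group
      _ = x₁ * (x₂ * y₁) * y₂ := by rw [c12]
      _ = (x₁ * x₂) * (y₁ * y₂) := by group
      _ = (x₂ * x₁) * (y₂ * y₁) := by rw [hcommP x₁ x₂ hx₁ hx₂, hcommQ y₁ y₂ hy₁ hy₂]
      _ = x₂ * (x₁ * y₂) * y₁ := by group
      _ = x₂ * (y₂ * x₁) * y₁ := by rw [c21]
      _ = x₂ * y₂ * (x₁ * y₁) := by group
    · exact h
  · -- distinct order-p subgroups don't permute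
    intro H K hH hK hne hcontra
    set M := mulSubgroup H K hcontra with hM
    have hHM : H ≤ M := fun h hh => ⟨h, hh, 1, K.one_mem, mul_one h⟩
    have hKM : K ≤ M := fun k hk => ⟨1, H.one_mem, k, hk, one_mul k⟩
    have hdM : Nat.card M ∣ p * q := hG ▸ Subgroup.card_subgroup_dvd_card M
    have hpM : p ∣ Nat.card M := hH ▸ Subgroup.card_dvd_of_le hHM
    obtain ⟨e, he⟩ := hpM
    have heq : e ∣ q := by
      have : p * e ∣ p * q := he ▸ hdM
      exact (mul_dvd_mul_iff_left hp.pos.ne').mp this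
    rcases hq.eq_one_or_self_of_dvd e heq with h1 | h1
    · -- card M = p, so H = M = K
      rw [h1, mul_one] at he
      have hHM' : H = M := Subgroup.eq_of_le_of_card_ge hHM (by rw [he, hH])
      have hKM' : K = M := Subgroup.eq_of_le_of_card_ge hKM (by rw [he, hK])
      exact hne (hHM'.trans hKM'.symm)
    · -- card M = pq, so M = ⊤, but |H*K| ≤ p² < pq
      rw [h1] at he
      have hMtop : M = ⊤ := Subgroup.eq_top_of_card_eq M (by rw [he, hG])
      have hcard : Nat.card ((H : Set G) * (K : Set G) : Set G) = p * q := by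
        have : ((H : Set G) * (K : Set G) : Set G) = (M : Set G) := rfl
        rw [this, hMtop]
        simpa using hG
      have hle : Nat.card ((H : Set G) * (K : Set G) : Set G) ≤ p * p := by
        have := Set.natCard_mul_le (s := (H : Set G)) (t := (K : Set G))
        rwa [show Nat.card (H : Set G) = p from hH, show Nat.card (K : Set G) = p from hK] at this
      rw [hcard] at hle
      have : q ≤ p := Nat.le_of_mul_le_mul_left hle hp.pos
      omega
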